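/- Let η, η̃ ∈ A and let χ : H → ℂ be a function. Define χ̃ : H → ℂ by χ̃(ξ) := χ(ξ + η̃ − η) · exp( (1/2)·{η−η̃, ξ} − (1/4)·g(η−η̃, η−η̃) − (i/2)·θ(η, η−η̃) − (i/2)·θ(η̃, η−η̃) ). Then: (a) χ̃(φ−η̃)·α^{η̃}(φ) = χ(φ−η)·α^{η}(φ) for every φ ∈ A; and (b) if χ is holomorphic on H (complex Fréchet differentiable at every point), then so is χ̃. -/

import Mathlib

/-- The wave function `α^η : A → ℂ`,
`α^η(φ) = exp( (i/2)·θ(η, φ−η) + (i/2)·θ(φ, φ−η) − (1/4)·g(φ−η, φ−η) )`,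
where `g(x,y) = Re ⟪x,y⟫`. -/
noncomputable def alphaFn {H A : Type*} [NormedAddCommGroup H] [InnerProductSpace ℂ H]
    [AddTorsor H A] (θ : A → H → ℝ) (η φ : A) : ℂ :=
  Complex.exp ((Complex.I / 2) * ((θ η (φ -ᵥ η) : ℝ) : ℂ)
    + (Complex.I / 2) * ((θ φ (φ -ᵥ η) : ℝ) : ℂ)
    - (1/4 : ℂ) * (((inner ℂ (φ -ᵥ η) (φ -ᵥ η) : ℂ).re : ℝ) : ℂ))

/-- The transformed wave function
`χ̃(ξ) := χ(ξ + η̃ − η) · exp( (1/2)·{η−η̃, ξ} − (1/4)·g(η−η̃, η−η̃)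
− (i/2)·θ(η, η−η̃) − (i/2)·θ(η̃, η−η̃) )`. -/
noncomputable def chiTilde {H A : Type*} [NormedAddCommGroup H] [InnerProductSpace ℂ H]
    [AddTorsor H A] (θ : A → H → ℝ) (η ηt : A) (χ : H → ℂ) (ξ : H) : ℂ :=
  χ (ξ + (ηt -ᵥ η)) *
    Complex.exp ((1/2 : ℂ) * (inner ℂ (η -ᵥ ηt) ξ : ℂ)
      - (1/4 : ℂ) * (((inner ℂ (η -ᵥ ηt) (η -ᵥ ηt) : ℂ).re : ℝ) : ℂ)
      - (Complex.I / 2) * ((θ η (η -ᵥ ηt) : ℝ) : ℂ)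
      - (Complex.I / 2) * ((θ ηt (η -ᵥ ηt) : ℝ) : ℂ))

/-- Let `η, η̃ ∈ A` and `χ : H → ℂ`.  Then
(a) `χ̃(φ−η̃)·α^{η̃}(φ) = χ(φ−η)·α^{η}(φ)` for all `φ ∈ A`; and
(b) if `χ` is holomorphic on `H`, then so is `χ̃`. -/
theorem statement3
    {H A : Type*} [NormedAddCommGroup H] [InnerProductSpace ℂ H] [CompleteSpace H]
    [AddTorsor H A]
    (θ : A → H → ℝ) (hθ : ∀ η : A, IsLinearMap ℝ (θ η))
    (B : H → H → ℝ)
    (hB₁ : ∀ y : H, IsLinearMap ℝ (fun x => B x y))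
    (hB₂ : ∀ x : H, IsLinearMap ℝ (B x))
    (hθB : ∀ (η : A) (ξ ξ' : H), θ (ξ +ᵥ η) ξ' = θ η ξ' + B ξ ξ')
    (hωB : ∀ ξ ξ' : H,
      (1/2 : ℝ) * (inner ℂ ξ ξ' : ℂ).im = (1/2 : ℝ) * (B ξ ξ' - B ξ' ξ))
    (η ηt : A) (χ : H → ℂ) :
    (∀ φ : A, chiTilde θ η ηt χ (φ -ᵥ ηt) * alphaFn θ ηt φ
        = χ (φ -ᵥ η) * alphaFn θ η φ) ∧
    (Differentiable ℂ χ → Differentiable ℂ (chiTilde θ η ηt χ)) := by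
  constructor
  · intro φ
    have hab : (φ -ᵥ ηt) + (ηt -ᵥ η) = φ -ᵥ η := vsub_add_vsub_cancel φ ηt η
    have haa : φ -ᵥ η = (φ -ᵥ ηt) - (η -ᵥ ηt) := (vsub_sub_vsub_cancel_right φ η ηt).symm
    unfold chiTilde alphaFn
    rw [hab, mul_assoc, ← Complex.exp_add]
    congr 1
    set d := η -ᵥ ηt with hd
    set b := φ -ᵥ ηt with hb
    have hη : d +ᵥ ηt = η := vsub_vadd η ηt
    have hφ : b +ᵥ ηt = φ := vsub_vadd φ ηt
    -- real facts
    have r1 : θ η b = θ ηt b + B d b := by rw [← hη, hθB]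
    have r4 : θ φ d = θ ηt d + B b d := by rw [← hφ, hθB]
    have r5 : θ φ (φ -ᵥ η) = θ φ b - θ φ d := by
      rw [haa]; exact (IsLinearMap.mk' (θ φ) (hθ φ)).map_sub b d
    have r6 : θ η (φ -ᵥ η) = θ η b - θ η d := by
      rw [haa]; exact (IsLinearMap.mk' (θ η) (hθ η)).map_sub b d
    have rsym : (inner ℂ b d : ℂ).re = (inner ℂ d b : ℂ).re := by
      rw [← inner_conj_symm d b, Complex.conj_re]
    have r7 : (inner ℂ (φ -ᵥ η) (φ -ᵥ η) : ℂ).re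
        = (inner ℂ b b : ℂ).re - 2 * (inner ℂ d b : ℂ).re + (inner ℂ d d : ℂ).re := by
      rw [haa, inner_sub_sub_self]
      simp [rsym]; ring
    have r8 : (inner ℂ d b : ℂ).im = B d b - B b d := by
      have := hωB d b; linarith
    -- complex versions
    have c1 : ((θ η b : ℝ) : ℂ) = ((θ ηt b : ℝ) : ℂ) + ((B d b : ℝ) : ℂ) := by
      rw [r1]; push_cast; ring
    have c4 : ((θ φ d : ℝ) : ℂ) = ((θ ηt d : ℝ) : ℂ) + ((B b d : ℝ) : ℂ) := by
      rw [r4]; push_cast; ring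
    have c5 : ((θ φ (φ -ᵥ η) : ℝ) : ℂ) = ((θ φ b : ℝ) : ℂ) - ((θ φ d : ℝ) : ℂ) := by
      rw [r5]; push_cast; ring
    have c6 : ((θ η (φ -ᵥ η) : ℝ) : ℂ) = ((θ η b : ℝ) : ℂ) - ((θ η d : ℝ) : ℂ) := by
      rw [r6]; push_cast; ring
    have c7 : (((inner ℂ (φ -ᵥ η) (φ -ᵥ η) : ℂ).re : ℝ) : ℂ)
        = (((inner ℂ b b : ℂ).re : ℝ) : ℂ) - 2 * (((inner ℂ d b : ℂ).re : ℝ) : ℂ)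
          + (((inner ℂ d d : ℂ).re : ℝ) : ℂ) := by
      rw [r7]; push_cast; ring
    have c8 : (((inner ℂ d b : ℂ).im : ℝ) : ℂ) = ((B d b : ℝ) : ℂ) - ((B b d : ℝ) : ℂ) := by
      rw [r8]; push_cast; ring
    have hdb : (inner ℂ d b : ℂ)
        = (((inner ℂ d b : ℂ).re : ℝ) : ℂ) + (((inner ℂ d b : ℂ).im : ℝ) : ℂ) * Complex.I :=
      (Complex.re_add_im _).symm
    rw [hdb]
    congr 1
    linear_combination (1/4 : ℂ) * c7 + (Complex.I/2) * c8 - (Complex.I/2) * c6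
      - (Complex.I/2) * c5 - (Complex.I/2) * c1 + (Complex.I/2) * c4
  · intro hχ
    unfold chiTilde
    apply Differentiable.mul
    · exact hχ.comp (differentiable_id.add_const _)
    · apply Complex.differentiable_exp.comp
      apply Differentiable.sub
      apply Differentiable.sub
      apply Differentiable.sub
      · exact ((innerSL ℂ (η -ᵥ ηt)).differentiable).const_mul _
      all_goals exact differentiable_const _
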